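/- For finite metric measure spaces (X, d_X, μ_X) and (Y, d_Y, μ_Y), where μ_X and μ_Y are probability mass functions, GW((X, d_X, μ_X), (Y, d_Y, μ_Y)) = 0 if and only if there exists a bijection φ from the support of μ_X (the set of x with μ_X(x) > 0) to the support of μ_Y such that d_Y(φ(x), φ(x')) = d_X(x, x') for all x, x' in the support of μ_X, and μ_Y(φ(x)) = μ_X(x) for all x in the support of μ_X. -/

import Mathlib

open Finset

/-- `d : X × X → ℝ` is a metric on `X`. -/
def IsMetric {X : Type*} (d : X × X → ℝ) : Prop :=
  (∀ x y, d (x, y) = 0 ↔ x = y) ∧ (∀ x y, d (x, y) = d (y, x)) ∧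
    (∀ x y z, d (x, z) ≤ d (x, y) + d (y, z))

/-- The set of couplings between two finite measures. -/
def couplings {X Y : Type*} [Fintype X] [Fintype Y]
    (μX : X → NNReal) (μY : Y → NNReal) : Set (X × Y → NNReal) :=
  {u | (∀ x, ∑ y, u (x, y) = μX x) ∧ (∀ y, ∑ x, u (x, y) = μY y)}

/-- The Gromov-Wasserstein objective of a coupling `u`. -/
noncomputable def GWobj {X Y : Type*} [Fintype X] [Fintype Y]
    (dX : X × X → ℝ) (dY : Y × Y → ℝ) (u : X × Y → NNReal) : ℝ :=
  ∑ x, ∑ x', ∑ y, ∑ y',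
    |dX (x, x') - dY (y, y')| ^ 2 * (u (x, y) : ℝ) * (u (x', y') : ℝ)

/-- The squared Gromov-Wasserstein distance between finite metric measure spaces. -/
noncomputable def GWsq {X Y : Type*} [Fintype X] [Fintype Y]
    (dX : X × X → ℝ) (μX : X → NNReal) (dY : Y × Y → ℝ) (μY : Y → NNReal) : ℝ :=
  sInf (GWobj dX dY '' couplings μX μY)

/-- The Gromov-Wasserstein distance between finite metric measure spaces. -/
noncomputable def GW {X Y : Type*} [Fintype X] [Fintype Y]
    (dX : X × X → ℝ) (μX : X → NNReal) (dY : Y × Y → ℝ) (μY : Y → NNReal) : ℝ :=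
  Real.sqrt (GWsq dX μX dY μY)

section Aux

variable {X Y : Type*} [Fintype X] [Fintype Y]

lemma prod_mem_couplings (μX : X → NNReal) (μY : Y → NNReal)
    (hμX : ∑ x, μX x = 1) (hμY : ∑ y, μY y = 1) :
    (fun p : X × Y => μX p.1 * μY p.2) ∈ couplings μX μY := by
  constructor
  · intro x; simp [← Finset.mul_sum, hμY]
  · intro y; simp [← Finset.sum_mul, hμX]

lemma GWobj_nonneg (dX : X × X → ℝ) (dY : Y × Y → ℝ) (u : X × Y → NNReal) :
    0 ≤ GWobj dX dY u := by
  unfold GWobj; positivity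

lemma GWobj_continuous (dX : X × X → ℝ) (dY : Y × Y → ℝ) :
    Continuous (GWobj dX dY) := by
  unfold GWobj
  refine continuous_finset_sum _ fun x _ => continuous_finset_sum _ fun x' _ =>
    continuous_finset_sum _ fun y _ => continuous_finset_sum _ fun y' _ => ?_
  exact (continuous_const.mul (NNReal.continuous_coe.comp (continuous_apply (x, y)))).mul
    (NNReal.continuous_coe.comp (continuous_apply (x', y')))

lemma couplings_isCompact (μX : X → NNReal) (μY : Y → NNReal) :
    IsCompact (couplings μX μY) := by
  have hclosed : IsClosed (couplings μX μY) := by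
    have heq : couplings μX μY =
        (⋂ x, {u : X × Y → NNReal | ∑ y, u (x, y) = μX x}) ∩
        (⋂ y, {u : X × Y → NNReal | ∑ x, u (x, y) = μY y}) := by
      ext u; simp [couplings, Set.mem_iInter, forall_and]
    rw [heq]
    refine IsClosed.inter (isClosed_iInter fun x => ?_) (isClosed_iInter fun y => ?_)
    · exact isClosed_eq (continuous_finset_sum _ fun y _ => continuous_apply (x, y))
        continuous_const
    · exact isClosed_eq (continuous_finset_sum _ fun x _ => continuous_apply (x, y))
        continuous_const
  have hsub : couplings μX μY ⊆ Set.univ.pi (fun p : X × Y => Set.Icc 0 (μX p.1)) := by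
    intro u hu p _
    refine ⟨zero_le, ?_⟩
    calc u p = u (p.1, p.2) := by rfl
      _ ≤ ∑ y, u (p.1, y) :=
          Finset.single_le_sum (f := fun y => u (p.1, y)) (fun i _ => zero_le) (mem_univ p.2)
      _ = μX p.1 := hu.1 p.1
  exact (isCompact_univ_pi fun p => isCompact_Icc).of_isClosed_subset hclosed hsub

lemma sum_eq_zero_of_nonneg {ι : Type*} {s : Finset ι} {f : ι → ℝ}
    (h0 : ∀ i ∈ s, 0 ≤ f i) (h : ∑ i ∈ s, f i = 0) : ∀ i ∈ s, f i = 0 :=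
  (Finset.sum_eq_zero_iff_of_nonneg h0).mp h

end Aux

/-- `GW = 0` iff there is a measure-preserving isometric bijection between the supports. -/
theorem GW_eq_zero_iff_isometry {X Y : Type*} [Fintype X] [Fintype Y]
    (dX : X × X → ℝ) (μX : X → NNReal) (dY : Y × Y → ℝ) (μY : Y → NNReal)
    (hdX : IsMetric dX) (hdY : IsMetric dY)
    (hμX : ∑ x, μX x = 1) (hμY : ∑ y, μY y = 1) :
    GW dX μX dY μY = 0 ↔
      ∃ φ : {x : X // 0 < μX x} → {y : Y // 0 < μY y},
        Function.Bijective φ ∧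
        (∀ x x' : {x : X // 0 < μX x},
          dY ((φ x : Y), (φ x' : Y)) = dX ((x : X), (x' : X))) ∧
        (∀ x : {x : X // 0 < μX x}, μY (φ x : Y) = μX (x : X)) := by
  have hne : (couplings μX μY).Nonempty := ⟨_, prod_mem_couplings μX μY hμX hμY⟩
  have hbdd : BddBelow (GWobj dX dY '' couplings μX μY) := by
    refine ⟨0, ?_⟩
    rintro b ⟨v, -, rfl⟩
    exact GWobj_nonneg dX dY v
  have himg_ne : (GWobj dX dY '' couplings μX μY).Nonempty := hne.image _
  constructor
  · -- forward direction
    intro h0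
    -- attain the infimum
    obtain ⟨u, huK, hmin⟩ := (couplings_isCompact μX μY).exists_isMinOn hne
      (GWobj_continuous dX dY).continuousOn
    have hsinf : GWsq dX μX dY μY = GWobj dX dY u := by
      refine le_antisymm (csInf_le hbdd ⟨u, huK, rfl⟩) ?_
      refine le_csInf himg_ne ?_
      rintro b ⟨v, hv, rfl⟩
      exact hmin hv
    have hsq0 : GWsq dX μX dY μY ≤ 0 := Real.sqrt_eq_zero'.mp h0
    have hobj0 : GWobj dX dY u = 0 :=
      le_antisymm (hsinf ▸ hsq0) (GWobj_nonneg dX dY u)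
    -- each term is zero
    have hterm : ∀ x x' y y',
        |dX (x, x') - dY (y, y')| ^ 2 * (u (x, y) : ℝ) * (u (x', y') : ℝ) = 0 := by
      intro x x' y y'
      have h1 := sum_eq_zero_of_nonneg (fun i _ => by positivity) hobj0 x (mem_univ x)
      have h2 := sum_eq_zero_of_nonneg (fun i _ => by positivity) h1 x' (mem_univ x')
      have h3 := sum_eq_zero_of_nonneg (fun i _ => by positivity) h2 y (mem_univ y)
      exact sum_eq_zero_of_nonneg (fun i _ => by positivity) h3 y' (mem_univ y')
    have key : ∀ x x' y y', 0 < u (x, y) → 0 < u (x', y') → dX (x, x') = dY (y, y') := by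
      intro x x' y y' h1 h2
      have h1' : (u (x, y) : ℝ) ≠ 0 := by positivity
      have h2' : (u (x', y') : ℝ) ≠ 0 := by positivity
      have := hterm x x' y y'
      have habs : |dX (x, x') - dY (y, y')| ^ 2 = 0 := by
        rcases mul_eq_zero.mp this with h | h
        · rcases mul_eq_zero.mp h with h | h
          · exact h
          · exact absurd h h1'
        · exact absurd h h2'
      have := abs_eq_zero.mp (pow_eq_zero_iff (n := 2) (by norm_num) |>.mp habs)
      linarith
    -- uniqueness in each coordinate
    have uy : ∀ x y y', 0 < u (x, y) → 0 < u (x, y') → y = y' := by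
      intro x y y' h1 h2
      have := key x x y y' h1 h2
      rw [(hdX.1 x x).mpr rfl] at this
      exact (hdY.1 y y').mp this.symm
    have ux : ∀ x x' y, 0 < u (x, y) → 0 < u (x', y) → x = x' := by
      intro x x' y h1 h2
      have := key x x' y y h1 h2
      rw [(hdY.1 y y).mpr rfl] at this
      exact (hdX.1 x x').mp this
    -- the map
    have hex : ∀ x : {x : X // 0 < μX x}, ∃ y : Y, 0 < u (x.1, y) := by
      intro x
      have hsum : ∑ y, u (x.1, y) ≠ 0 := by
        rw [huK.1 x.1]; exact x.2.ne'
      obtain ⟨y, -, hy⟩ := Finset.exists_ne_zero_of_sum_ne_zero hsum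
      exact ⟨y, pos_iff_ne_zero.mpr hy⟩
    choose f hf using hex
    have hfY : ∀ x, 0 < μY (f x) := by
      intro x
      have : u (x.1, f x) ≤ μY (f x) := by
        rw [← huK.2 (f x)]
        exact Finset.single_le_sum (f := fun x' => u (x', f x)) (fun i _ => zero_le)
          (mem_univ x.1)
      exact lt_of_lt_of_le (hf x) this
    refine ⟨fun x => ⟨f x, hfY x⟩, ⟨?_, ?_⟩, ?_, ?_⟩
    · -- injective
      intro x x' hxx'
      have hfeq : f x = f x' := congrArg Subtype.val hxx'
      have := ux x.1 x'.1 (f x) (hf x) (hfeq ▸ hf x')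
      exact Subtype.ext this
    · -- surjective
      rintro ⟨y, hy⟩
      have hsum : ∑ x, u (x, y) ≠ 0 := by
        rw [huK.2 y]; exact hy.ne'
      obtain ⟨x, -, hx⟩ := Finset.exists_ne_zero_of_sum_ne_zero hsum
      have hxpos : 0 < u (x, y) := pos_iff_ne_zero.mpr hx
      have hxX : 0 < μX x := by
        refine lt_of_lt_of_le hxpos ?_
        rw [← huK.1 x]
        exact Finset.single_le_sum (f := fun y' => u (x, y')) (fun i _ => zero_le)
          (mem_univ y)
      refine ⟨⟨x, hxX⟩, ?_⟩
      exact Subtype.ext (uy x (f ⟨x, hxX⟩) y (hf ⟨x, hxX⟩) hxpos)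
    · -- isometry
      intro x x'
      exact (key x.1 x'.1 (f x) (f x') (hf x) (hf x')).symm
    · -- measure preserving
      intro x
      have h1 : μX x.1 = u (x.1, f x) := by
        rw [← huK.1 x.1]
        refine Finset.sum_eq_single (f x) (fun y _ hy => ?_) (fun h => absurd (mem_univ _) h)
        by_contra hne'
        exact hy (uy x.1 y (f x) (pos_iff_ne_zero.mpr hne') (hf x))
      have h2 : μY (f x) = u (x.1, f x) := by
        rw [← huK.2 (f x)]
        refine Finset.sum_eq_single x.1 (fun x' _ hx' => ?_) (fun h => absurd (mem_univ _) h)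
        by_contra hne'
        exact hx' (ux x' x.1 (f x) (pos_iff_ne_zero.mpr hne') (hf x))
      simp only
      rw [h2, h1]
  · -- reverse direction
    rintro ⟨φ, ⟨hinj, hsurj⟩, hiso, hmeas⟩
    classical
    set u : X × Y → NNReal :=
      fun p => if h : 0 < μX p.1 then (if p.2 = (φ ⟨p.1, h⟩ : Y) then μX p.1 else 0) else 0
      with hu_def
    have huK : u ∈ couplings μX μY := by
      constructor
      · intro x
        by_cases hx : 0 < μX x
        · simp only [hu_def, dif_pos hx]
          rw [Finset.sum_ite_eq' univ ((φ ⟨x, hx⟩ : Y)) (fun _ => μX x)]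
          simp
        · simp only [hu_def, dif_neg hx]
          simp only [Finset.sum_const_zero]
          exact (le_zero_iff.mp (not_lt.mp hx)).symm
      · intro y
        by_cases hy : 0 < μY y
        · obtain ⟨x0, hx0⟩ := hsurj ⟨y, hy⟩
          have hx0y : (φ x0 : Y) = y := congrArg Subtype.val hx0
          rw [Finset.sum_eq_single x0.1]
          · simp only [hu_def, dif_pos x0.2]
            rw [if_pos]
            · rw [← hmeas x0, hx0y]
            · exact hx0y.symm
          · intro x _ hx
            simp only [hu_def]
            split_ifs with h1 h2
            · exfalso
              have : φ ⟨x, h1⟩ = φ x0 := Subtype.ext (h2.symm.trans hx0y.symm)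
              exact hx (congrArg Subtype.val (hinj this))
            · rfl
            · rfl
          · exact fun h => absurd (mem_univ _) h
        · have hy0 : μY y = 0 := le_zero_iff.mp (not_lt.mp hy)
          rw [hy0]
          refine Finset.sum_eq_zero fun x _ => ?_
          simp only [hu_def]
          split_ifs with h1 h2
          · exfalso
            have hYX : μY y = μX x := by rw [h2]; exact hmeas ⟨x, h1⟩
            rw [hy0] at hYX
            exact h1.ne' hYX.symm
          · rfl
          · rfl
    have hobj : GWobj dX dY u = 0 := by
      refine Finset.sum_eq_zero fun x _ => Finset.sum_eq_zero fun x' _ =>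
        Finset.sum_eq_zero fun y _ => Finset.sum_eq_zero fun y' _ => ?_
      by_cases h1 : u (x, y) = 0
      · rw [h1]; simp
      by_cases h2 : u (x', y') = 0
      · rw [h2]; simp
      -- both positive: extract structure
      have hx : 0 < μX x := by
        by_contra hx
        apply h1; simp only [hu_def, dif_neg hx]
      have hy : y = (φ ⟨x, hx⟩ : Y) := by
        by_contra hy
        apply h1; simp only [hu_def, dif_pos hx, if_neg hy]
      have hx' : 0 < μX x' := by
        by_contra hx'
        apply h2; simp only [hu_def, dif_neg hx']
      have hy' : y' = (φ ⟨x', hx'⟩ : Y) := by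
        by_contra hy'
        apply h2; simp only [hu_def, dif_pos hx', if_neg hy']
      have : dY (y, y') = dX (x, x') := by
        rw [hy, hy']; exact hiso ⟨x, hx⟩ ⟨x', hx'⟩
      rw [this]
      simp
    have hGWsq : GWsq dX μX dY μY = 0 := by
      refine le_antisymm ?_ ?_
      · refine csInf_le hbdd ?_
        exact ⟨u, huK, hobj⟩
      · refine le_csInf himg_ne ?_
        rintro b ⟨v, -, rfl⟩
        exact GWobj_nonneg dX dY v
    rw [GW, hGWsq, Real.sqrt_zero]
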